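/- Let E be a Banach space, T : M(Ω, E) → ℓ¹ a bounded linear operator, (mₙ) a sequence of E-valued measures with |mₙ| ≤ λ for a probability measure λ, and suppose there exists a map ω ↦ T(ω) into the unit ball of L(E**, ℓ¹) such that each T(ω) is a compact operator and the ℓ¹-valued functions ω ↦ T(ω)(ρ(mₙ)(ω)) are Bochner integrable with T(mₙ) = ∫_Ω T(ω)(ρ(mₙ)(ω)) dλ(ω), where ρ(mₙ)(ω) ∈ E** with sup_{n,ω} ‖ρ(mₙ)(ω)‖ < ∞. Then {T(mₙ) : n ≥ 1} is relatively weakly compact in ℓ¹, hence relatively norm compact, and so (mₙ) has no subsequence generating a complemented copy of ℓ¹ under T. -/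

import Mathlib

open MeasureTheory Filter Topology

/-- The Banach space `ℓ¹` of absolutely summable real sequences. -/
noncomputable abbrev ell1 : Type := lp (fun _ : ℕ => ℝ) 1

namespace NormedSpace

/-- The topological dual of a seminormed space `E` (as in the older Mathlib: a type synonym
of `E →L[𝕜] 𝕜` carrying the operator-norm structure). -/
def Dual (𝕜 : Type*) [NontriviallyNormedField 𝕜] (E : Type*) [SeminormedAddCommGroup E]
    [NormedSpace 𝕜 E] : Type _ := E →L[𝕜] 𝕜

noncomputable instance (𝕜 : Type*) [NontriviallyNormedField 𝕜] (E : Type*) [SeminormedAddCommGroup E]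
    [NormedSpace 𝕜 E] : SeminormedAddCommGroup (Dual 𝕜 E) :=
  ContinuousLinearMap.toSeminormedAddCommGroup

noncomputable instance (𝕜 : Type*) [NontriviallyNormedField 𝕜] (E : Type*) [SeminormedAddCommGroup E]
    [NormedSpace 𝕜 E] : NormedSpace 𝕜 (Dual 𝕜 E) :=
  ContinuousLinearMap.toNormedSpace

instance (𝕜 : Type*) [NontriviallyNormedField 𝕜] (E : Type*) [SeminormedAddCommGroup E]
    [NormedSpace 𝕜 E] : FunLike (Dual 𝕜 E) E 𝕜 :=
  inferInstanceAs (FunLike (E →L[𝕜] 𝕜) E 𝕜)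

instance (𝕜 : Type*) [NontriviallyNormedField 𝕜] (E : Type*) [SeminormedAddCommGroup E]
    [NormedSpace 𝕜 E] : LinearMapClass (Dual 𝕜 E) 𝕜 E 𝕜 :=
  inferInstanceAs (LinearMapClass (E →L[𝕜] 𝕜) 𝕜 E 𝕜)

noncomputable instance (𝕜 : Type*) [NontriviallyNormedField 𝕜] (E : Type*) [NormedAddCommGroup E]
    [NormedSpace 𝕜 E] : NormedAddCommGroup (Dual 𝕜 E) :=
  ContinuousLinearMap.toNormedAddCommGroup

end NormedSpace

namespace Ell1Aux

/-- Evaluation at coordinate `i` as a continuous linear map. -/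
noncomputable def coordCLM (i : ℕ) : ell1 →L[ℝ] ℝ :=
  LinearMap.mkContinuous
    { toFun := fun f => f i
      map_add' := fun f g => by simp [lp.coeFn_add]
      map_smul' := fun c f => by simp [lp.coeFn_smul] }
    1 (fun f => by change ‖f i‖ ≤ 1 * ‖f‖; rw [one_mul]; exact lp.norm_apply_le_norm one_ne_zero f i)

@[simp] lemma coordCLM_apply (i : ℕ) (f : ell1) : coordCLM i f = f i := rfl

lemma single_add (i : ℕ) (a b : ℝ) :
    lp.single (E := fun _ : ℕ => ℝ) 1 i (a + b) =
      lp.single 1 i a + lp.single 1 i b := by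
  apply lp.ext
  funext j
  by_cases h : j = i
  · subst h; simp [lp.single_apply_self, lp.coeFn_add]
  · simp [lp.single_apply_ne _ _ _ h, lp.coeFn_add]

/-- `lp.single` as a continuous linear map. -/
noncomputable def singleCLM (i : ℕ) : ℝ →L[ℝ] ell1 :=
  LinearMap.mkContinuous
    { toFun := fun a => lp.single 1 i a
      map_add' := fun a b => single_add i a b
      map_smul' := fun c a => by
        simpa [smul_eq_mul] using lp.single_smul (E := fun _ : ℕ => ℝ) 1 i c a }
    1 (fun a => by
      simpa using (lp.norm_single (E := fun _ : ℕ => ℝ) (p := 1) (by norm_num)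
        (fun _ => a) i).le)

@[simp] lemma singleCLM_apply (i : ℕ) (a : ℝ) : singleCLM i a = lp.single 1 i a := rfl

/-- Truncation to the first `N` coordinates, as a continuous linear map. -/
noncomputable def truncCLM (N : ℕ) : ell1 →L[ℝ] ell1 :=
  ∑ i ∈ Finset.range N, (singleCLM i).comp (coordCLM i)

lemma truncCLM_apply (N : ℕ) (f : ell1) :
    truncCLM N f = ∑ i ∈ Finset.range N, lp.single 1 i (f i) := by
  simp [truncCLM, ContinuousLinearMap.sum_apply]

/-- The `N`-th tail norm. -/
noncomputable def tailN (N : ℕ) (f : ell1) : ℝ := ‖f - truncCLM N f‖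

lemma tailN_nonneg (N : ℕ) (f : ell1) : 0 ≤ tailN N f := norm_nonneg _

lemma tailN_eq (N : ℕ) (f : ell1) :
    tailN N f = ‖f‖ - ∑ i ∈ Finset.range N, ‖f i‖ := by
  have h := lp.norm_compl_sum_single (E := fun _ : ℕ => ℝ) (p := 1)
    (by norm_num) f (Finset.range N)
  simpa [tailN, truncCLM_apply] using h

lemma tailN_le_norm (N : ℕ) (f : ell1) : tailN N f ≤ ‖f‖ := by
  rw [tailN_eq]
  have : (0:ℝ) ≤ ∑ i ∈ Finset.range N, ‖f i‖ :=
    Finset.sum_nonneg fun _ _ => norm_nonneg _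
  linarith

lemma tailN_antitone (f : ell1) : Antitone fun N => tailN N f := by
  intro N M h
  simp only []
  rw [tailN_eq, tailN_eq]
  have : ∑ i ∈ Finset.range N, ‖f i‖ ≤ ∑ i ∈ Finset.range M, ‖f i‖ :=
    Finset.sum_le_sum_of_subset_of_nonneg
      (Finset.range_subset_range.2 h) (fun _ _ _ => norm_nonneg _)
  linarith

lemma tailN_tendsto (f : ell1) : Tendsto (fun N => tailN N f) atTop (𝓝 0) := by
  have h := (lp.hasSum_single (E := fun _ : ℕ => ℝ) (p := 1)
    (by norm_num) f).tendsto_sum_nat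
  have h2 : Tendsto (fun N => ‖f - ∑ i ∈ Finset.range N, lp.single 1 i (f i)‖)
      atTop (𝓝 ‖f - f‖) := (tendsto_const_nhds.sub h).norm
  simp only [sub_self, norm_zero] at h2
  refine h2.congr fun N => ?_
  rw [tailN, truncCLM_apply]

lemma tailN_le_add (N : ℕ) (s t : ell1) : tailN N s ≤ tailN N t + ‖s - t‖ := by
  have key : s - truncCLM N s =
      (t - truncCLM N t) + ((s - t) - truncCLM N (s - t)) := by
    rw [map_sub]; abel
  calc tailN N s = ‖(t - truncCLM N t) + ((s - t) - truncCLM N (s - t))‖ := by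
        rw [tailN, key]
    _ ≤ ‖t - truncCLM N t‖ + ‖(s - t) - truncCLM N (s - t)‖ := norm_add_le _ _
    _ ≤ tailN N t + ‖s - t‖ := by
        exact add_le_add le_rfl (tailN_le_norm N (s - t))

/-- Uniform smallness of tails on a compact set. -/
lemma uniform_tail (K : Set ell1) (hK : IsCompact K) {ε : ℝ} (hε : 0 < ε) :
    ∃ N₀ : ℕ, ∀ N ≥ N₀, ∀ s ∈ K, tailN N s < ε := by
  obtain ⟨t, ht_fin, ht_cov⟩ :=
    (Metric.totallyBounded_iff).1 hK.totallyBounded (ε/3) (by linarith)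
  have hev : ∀ᶠ N in atTop, ∀ c ∈ t, tailN N c < ε/3 := by
    rw [eventually_all_finite ht_fin]
    intro c _
    exact (tailN_tendsto c).eventually_lt_const (by linarith)
  obtain ⟨N₀, hN₀⟩ := eventually_atTop.1 hev
  refine ⟨N₀, fun N hN s hs => ?_⟩
  obtain ⟨c, hc, hsc⟩ := Set.mem_iUnion₂.1 (ht_cov hs)
  have hdist : ‖s - c‖ < ε/3 := by
    rw [← dist_eq_norm]; exact hsc
  have := tailN_le_add N s c
  have hc3 := hN₀ N hN c hc
  linarith

end Ell1Aux

/-- Partition sums for the variation `|m|(A)` of a vector measure. -/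
def variationSet {Ω : Type*} [MeasurableSpace Ω] {X : Type*} [NormedAddCommGroup X]
    (m : VectorMeasure Ω X) (A : Set Ω) : Set ℝ :=
  {r | ∃ (k : ℕ) (B : Fin k → Set Ω), (∀ i, MeasurableSet (B i)) ∧ (∀ i, B i ⊆ A) ∧
    (Pairwise (Function.onFun Disjoint B)) ∧ r = ∑ i, ‖m (B i)‖}

/-- Let `T : M(Ω, E) → ℓ¹` be a bounded operator, `(mₙ)` a sequence of `E`-valued measures
with `|mₙ| ≤ λ` for a probability measure `λ`, and suppose that (as provided by the
representation of operators on `M(Ω, E)`) there is a map `ω ↦ T(ω)` into the unit ball of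
`L(E**, ℓ¹)` consisting of compact operators, with `ω ↦ T(ω)(ρ(mₙ)(ω))` Bochner integrable
and `T(mₙ) = ∫_Ω T(ω)(ρ(mₙ)(ω)) dλ(ω)`, where `ρ(mₙ)` is a uniformly bounded weak*-density
of `mₙ`.  Then `{T(mₙ) : n ≥ 1}` is relatively weakly compact in `ℓ¹`, hence (by the Schur
property) relatively norm compact; so `(mₙ)` has no subsequence on which `T` fixes a copy of
the `ℓ¹`-basis, i.e. `(mₙ)` generates no complemented copy of `ℓ¹` under `T`. -/
theorem relatively_compact_image_of_compact_densities
    {Ω : Type*} [MeasurableSpace Ω] {E : Type*} [NormedAddCommGroup E] [NormedSpace ℝ E]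
    [CompleteSpace E]
    (lam : Measure Ω) [IsProbabilityMeasure lam]
    (m : ℕ → VectorMeasure Ω E)
    (hm : ∀ n, ∀ A : Set Ω, MeasurableSet A →
      ∀ r ∈ variationSet (m n) A, r ≤ (lam A).toReal)
    (ρ : ℕ → Ω → NormedSpace.Dual ℝ (NormedSpace.Dual ℝ E))
    (hρ : ∀ n (x' : NormedSpace.Dual ℝ E) (A : Set Ω), MeasurableSet A →
      x' ((m n) A) = ∫ ω in A, ρ n ω x' ∂lam)
    (hρbdd : ∃ C : ℝ, ∀ n ω, ‖ρ n ω‖ ≤ C)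
    (T : Ω → (NormedSpace.Dual ℝ (NormedSpace.Dual ℝ E) →L[ℝ] ell1))
    (hT1 : ∀ ω, ‖T ω‖ ≤ 1)
    (hTcpt : ∀ ω, IsCompactOperator (T ω))
    (hint : ∀ n, Integrable (fun ω => T ω (ρ n ω)) lam)
    (y : ℕ → ell1)
    (hy : ∀ n, y n = ∫ ω, T ω (ρ n ω) ∂lam) :
    IsCompact (@closure (WeakSpace ℝ ell1) _ (Set.range y)) ∧
    IsCompact (closure (Set.range y)) := by
  classical
  obtain ⟨C₀, hC₀⟩ := hρbdd
  set C : ℝ := max C₀ 0 with hCdef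
  have hC : ∀ n ω, ‖ρ n ω‖ ≤ C := fun n ω => (hC₀ n ω).trans (le_max_left _ _)
  have hC0 : (0:ℝ) ≤ C := le_max_right _ _
  set f : ℕ → Ω → ell1 := fun n ω => T ω (ρ n ω) with hfdef
  have hf_norm : ∀ n ω, ‖f n ω‖ ≤ C := by
    intro n ω
    calc ‖f n ω‖ ≤ ‖T ω‖ * ‖ρ n ω‖ := (T ω).le_opNorm _
      _ ≤ 1 * C := mul_le_mul (hT1 ω) (hC n ω) (norm_nonneg _) zero_le_one
      _ = C := one_mul C
  have hy_norm : ∀ n, ‖y n‖ ≤ C := by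
    intro n
    rw [hy n]
    calc ‖∫ ω, f n ω ∂lam‖ ≤ C * (lam Set.univ).toReal :=
          norm_integral_le_of_norm_le_const (Filter.Eventually.of_forall fun ω => hf_norm n ω)
      _ = C := by simp
  -- Step A : uniform smallness of the tails of the `y n`
  have bdd : ∀ (N : ℕ) (ω : Ω), BddAbove (Set.range fun n => Ell1Aux.tailN N (f n ω)) := by
    intro N ω
    refine ⟨C, ?_⟩
    rintro r ⟨n, rfl⟩
    exact (Ell1Aux.tailN_le_norm _ _).trans (hf_norm n ω)
  set g : ℕ → Ω → ℝ := fun N ω => ⨆ n, Ell1Aux.tailN N (f n ω) with hgdef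
  have hg_nonneg : ∀ N ω, 0 ≤ g N ω := fun N ω =>
    (Ell1Aux.tailN_nonneg N (f 0 ω)).trans (le_ciSup (bdd N ω) 0)
  have hg_le : ∀ N ω, g N ω ≤ C := fun N ω =>
    ciSup_le fun n => (Ell1Aux.tailN_le_norm _ _).trans (hf_norm n ω)
  have hfm : ∀ n, AEStronglyMeasurable (f n) lam := fun n => (hint n).aestronglyMeasurable
  have htail_meas : ∀ N n, AEStronglyMeasurable (fun ω => Ell1Aux.tailN N (f n ω)) lam := by
    intro N n
    have hc : Continuous fun x : ell1 => ‖x - Ell1Aux.truncCLM N x‖ :=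
      (continuous_id.sub (Ell1Aux.truncCLM N).continuous).norm
    exact hc.comp_aestronglyMeasurable (hfm n)
  have hg_meas : ∀ N, AEStronglyMeasurable (g N) lam := fun N =>
    (AEMeasurable.iSup fun n => (htail_meas N n).aemeasurable).aestronglyMeasurable
  have hg_bound : ∀ N, ∀ᵐ ω ∂lam, ‖g N ω‖ ≤ C := by
    intro N
    refine Filter.Eventually.of_forall fun ω => ?_
    rw [Real.norm_eq_abs, abs_of_nonneg (hg_nonneg N ω)]
    exact hg_le N ω
  have hg_int : ∀ N, Integrable (g N) lam := fun N =>
    Integrable.mono' (integrable_const C) (hg_meas N) (hg_bound N)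
  have h_tail_y : ∀ N n, Ell1Aux.tailN N (y n) ≤ ∫ ω, g N ω ∂lam := by
    intro N n
    have htrunc_int : Integrable (fun ω => Ell1Aux.truncCLM N (f n ω)) lam :=
      (Ell1Aux.truncCLM N).integrable_comp (hint n)
    have hGint : y n - Ell1Aux.truncCLM N (y n) =
        ∫ ω, (f n ω - Ell1Aux.truncCLM N (f n ω)) ∂lam := by
      have h1 : Ell1Aux.truncCLM N (y n) = ∫ ω, Ell1Aux.truncCLM N (f n ω) ∂lam := by
        rw [hy n]
        exact (ContinuousLinearMap.integral_comp_comm _ (hint n)).symm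
      rw [h1, hy n]
      exact (integral_sub (hint n) htrunc_int).symm
    have hint2 : Integrable (fun ω => f n ω - Ell1Aux.truncCLM N (f n ω)) lam :=
      (hint n).sub htrunc_int
    calc Ell1Aux.tailN N (y n)
        = ‖∫ ω, (f n ω - Ell1Aux.truncCLM N (f n ω)) ∂lam‖ := by
          rw [Ell1Aux.tailN, hGint]
      _ ≤ ∫ ω, ‖f n ω - Ell1Aux.truncCLM N (f n ω)‖ ∂lam := norm_integral_le_integral_norm _
      _ ≤ ∫ ω, g N ω ∂lam :=
          integral_mono hint2.norm (hg_int N) fun ω => le_ciSup (bdd N ω) n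
  have hDCT : Tendsto (fun N => ∫ ω, g N ω ∂lam) atTop (𝓝 0) := by
    have h0 : Tendsto (fun N => ∫ ω, g N ω ∂lam) atTop (𝓝 (∫ (_ : Ω), (0:ℝ) ∂lam)) := by
      apply tendsto_integral_of_dominated_convergence (fun _ => C) hg_meas (integrable_const C)
        hg_bound
      refine Filter.Eventually.of_forall fun ω => ?_
      have hK : IsCompact (closure ((T ω) '' Metric.closedBall 0 C)) :=
        IsCompactOperator.isCompact_closure_image_closedBall
          (f := ((T ω) : NormedSpace.Dual ℝ (NormedSpace.Dual ℝ E) →ₗ[ℝ] ell1)) (hTcpt ω) C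
      have hmem : ∀ n, f n ω ∈ closure ((T ω) '' Metric.closedBall 0 C) := fun n =>
        subset_closure ⟨ρ n ω, by
          simpa [Metric.mem_closedBall, dist_zero_right] using hC n ω, rfl⟩
      rw [Metric.tendsto_atTop]
      intro ε hε
      obtain ⟨N₀, hN₀⟩ := Ell1Aux.uniform_tail _ hK (half_pos hε)
      refine ⟨N₀, fun N hN => ?_⟩
      rw [Real.dist_eq, sub_zero, abs_of_nonneg (hg_nonneg N ω)]
      have : g N ω ≤ ε/2 := ciSup_le fun n => (hN₀ N hN _ (hmem n)).le
      linarith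
    simpa using h0
  have keyA : ∀ ε > (0:ℝ), ∃ N, ∀ n, Ell1Aux.tailN N (y n) ≤ ε := by
    intro ε hε
    obtain ⟨N, hN⟩ := (hDCT.eventually_lt_const hε).exists
    exact ⟨N, fun n => (h_tail_y N n).trans hN.le⟩
  -- Step B : total boundedness of the range of `y`
  have keyB : TotallyBounded (Set.range y) := by
    rw [Metric.totallyBounded_iff]
    intro ε hε
    obtain ⟨N, hN⟩ := keyA (ε/3) (by linarith)
    set Φ : (Fin N → ℝ) → ell1 := fun v => ∑ i : Fin N, v i • lp.single 1 (i:ℕ) 1 with hΦdef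
    have hΦcont : Continuous Φ := by
      apply continuous_finset_sum
      intro i _
      exact (continuous_apply (A := fun _ : Fin N => ℝ) i).smul continuous_const
    have hKc : IsCompact (Φ '' Metric.closedBall 0 C) :=
      (isCompact_closedBall (0 : Fin N → ℝ) C).image hΦcont
    have hmem : ∀ n, Ell1Aux.truncCLM N (y n) ∈ Φ '' Metric.closedBall 0 C := by
      intro n
      refine ⟨fun i => y n (i:ℕ), ?_, ?_⟩
      · rw [Metric.mem_closedBall, dist_zero_right]
        refine (pi_norm_le_iff_of_nonneg hC0).2 fun i => ?_
        exact (lp.norm_apply_le_norm one_ne_zero (y n) (i:ℕ)).trans (hy_norm n)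
      · rw [Ell1Aux.truncCLM_apply,
          Finset.sum_range (fun i => lp.single (E := fun _ : ℕ => ℝ) 1 i (y n i))]
        refine Finset.sum_congr rfl fun i _ => ?_
        rw [← lp.single_smul]
        norm_num
    obtain ⟨t, ht_fin, ht_cov⟩ :=
      (Metric.totallyBounded_iff).1 hKc.totallyBounded (ε/3) (by linarith)
    refine ⟨t, ht_fin, ?_⟩
    rintro - ⟨n, rfl⟩
    obtain ⟨c, hc, hyc⟩ := Set.mem_iUnion₂.1 (ht_cov (hmem n))
    refine Set.mem_iUnion₂.2 ⟨c, hc, ?_⟩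
    rw [Metric.mem_ball]
    have h1 : dist (y n) (Ell1Aux.truncCLM N (y n)) ≤ ε/3 := by
      rw [dist_eq_norm]; exact hN n
    have h2 : dist (Ell1Aux.truncCLM N (y n)) c < ε/3 := Metric.mem_ball.1 hyc
    calc dist (y n) c ≤ dist (y n) (Ell1Aux.truncCLM N (y n))
          + dist (Ell1Aux.truncCLM N (y n)) c := dist_triangle _ _ _
      _ < ε := by linarith
  have hKnorm : IsCompact (closure (Set.range y)) :=
    TotallyBounded.isCompact_of_isClosed keyB.closure isClosed_closure
  refine ⟨?_, hKnorm⟩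
  -- weak compactness via T2-ness of the weak topology
  have hinj : Function.Injective ((topDualPairing ℝ ell1).flip) := by
    intro a b hab
    rw [NormedSpace.eq_iff_forall_dual_eq (𝕜 := ℝ)]
    intro gdual
    exact congrArg (fun φ => φ gdual) hab
  haveI : T2Space (WeakSpace ℝ ell1) := (WeakBilin.isEmbedding hinj).t2Space
  set KS : Set ell1 := closure (Set.range y) with hKS
  have hsub0 : Set.range y ⊆ KS := subset_closure
  have hKw : IsCompact (toWeakSpaceCLM ℝ ell1 '' KS) :=
    hKnorm.image (toWeakSpaceCLM ℝ ell1).continuous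
  have himg : toWeakSpaceCLM ℝ ell1 '' KS = KS := by
    ext x; exact ⟨fun ⟨z, hz, hzx⟩ => hzx ▸ hz, fun hx => ⟨x, hx, rfl⟩⟩
  rw [himg] at hKw
  have hclosed : @IsClosed (WeakSpace ℝ ell1) _ KS := hKw.isClosed
  have hsub : @closure (WeakSpace ℝ ell1) _ (Set.range y) ⊆ KS :=
    @closure_minimal (WeakSpace ℝ ell1) _ _ _ hsub0 hclosed
  exact hKw.of_isClosed_subset (@isClosed_closure (WeakSpace ℝ ell1) _ _) hsub
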